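/- Let $(a_n)$ be a proper sequence in a semigroup. Then the set $A = FS(a_n)$ can be partitioned (up to adding leftovers to one part) into infinitely many pairwise disjoint proper IP sets; i.e., there exist injective sequences $(b^{(k)}_n)_n$ for $k \in \mathbb{N}$ such that the sets $FS(b^{(k)}_n)$ are pairwise disjoint subsets of $A$. -/

import Mathlib

/-- The ordered sum `a_{i_1} + ⋯ + a_{i_m}` over a finite index set
`F = {i_1 < ⋯ < i_m}` (junk value `a 0` if `F = ∅`). -/
def ordsum {S : Type*} [AddSemigroup S] (a : ℕ → S) (F : Finset ℕ) : S :=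
  match F.sort (· ≤ ·) with
  | [] => a 0
  | i :: l => l.foldl (fun s j => s + a j) (a i)

/-- `F < G`: every element of `F` is smaller than every element of `G`. -/
def FinsetLT (F G : Finset ℕ) : Prop := ∀ i ∈ F, ∀ j ∈ G, i < j

/-- `FS(a_1, a_2, …)`: the set of all finite ordered sums of the sequence `a`. -/
def FSset {S : Type*} [AddSemigroup S] (a : ℕ → S) : Set S :=
  {s | ∃ F : Finset ℕ, F.Nonempty ∧ ordsum a F = s}

/-- `FS(a_n, a_{n+1}, …)`: finite ordered sums with all indices `≥ n`. -/
def FStail {S : Type*} [AddSemigroup S] (a : ℕ → S) (n : ℕ) : Set S :=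
  {s | ∃ F : Finset ℕ, F.Nonempty ∧ (∀ i ∈ F, n ≤ i) ∧ ordsum a F = s}

/-- A sequence is proper if `a_{F₁} ≠ a_{F₂}` whenever `F₁ < F₂`. -/
def IsProperSeq {S : Type*} [AddSemigroup S] (a : ℕ → S) : Prop :=
  ∀ F G : Finset ℕ, F.Nonempty → G.Nonempty → FinsetLT F G →
    ordsum a F ≠ ordsum a G

/-- `b` is a sumsequence of `a`: `b_k = a_{F_k}` for finite index sets `F₁ < F₂ < ⋯`. -/
def IsSumseq {S : Type*} [AddSemigroup S] (a b : ℕ → S) : Prop :=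
  ∃ F : ℕ → Finset ℕ, (∀ k, (F k).Nonempty) ∧
    (∀ k, FinsetLT (F k) (F (k + 1))) ∧ (∀ k, b k = ordsum a (F k))

/-! ### Basic lemmas about `ordsum` -/

section OrdsumLemmas

variable {S : Type*} [AddSemigroup S] (a : ℕ → S)

lemma ordsum_sort_eq {F : Finset ℕ} {i : ℕ} {l : List ℕ}
    (h : F.sort (· ≤ ·) = i :: l) :
    ordsum a F = l.foldl (fun s j => s + a j) (a i) := by
  unfold ordsum
  rw [h]

lemma ordsum_singleton (i : ℕ) : ordsum a {i} = a i :=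
  ordsum_sort_eq a (Finset.sort_singleton _ i)

private lemma foldl_add (x : S) : ∀ (l : List ℕ) (y : S),
    l.foldl (fun s j => s + a j) (x + y) = x + l.foldl (fun s j => s + a j) y := by
  intro l
  induction l with
  | nil => intro y; rfl
  | cons j l ih => intro y; simp only [List.foldl, add_assoc, ih]

lemma ordsum_insert_min {F : Finset ℕ} {i : ℕ} (hlt : ∀ j ∈ F, i < j) (hne : F.Nonempty) :
    ordsum a (insert i F) = a i + ordsum a F := by
  obtain ⟨f, l, hf⟩ : ∃ f l, F.sort (· ≤ ·) = f :: l := by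
    obtain ⟨x, hx⟩ := hne
    cases h : F.sort (· ≤ ·) with
    | nil => exfalso; have := (Finset.mem_sort (α := ℕ) (· ≤ ·)).2 hx; rw [h] at this; simp at this
    | cons f l => exact ⟨f, l, rfl⟩
  have hs : (insert i F).sort (· ≤ ·) = i :: F.sort (· ≤ ·) := by
    refine Finset.sort_insert _ (fun b hb => (hlt b hb).le) (fun hi => lt_irrefl i (hlt i hi))
  rw [ordsum_sort_eq a hs, ordsum_sort_eq a hf, hf]
  simp only [List.foldl]
  rw [foldl_add]

lemma ordsum_union {F G : Finset ℕ} (hFG : FinsetLT F G) (hF : F.Nonempty) (hG : G.Nonempty) :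
    ordsum a (F ∪ G) = ordsum a F + ordsum a G := by
  induction F using Finset.induction_on_min with
  | empty => exact absurd hF (by simp)
  | insert i s hmin ih =>
    rcases s.eq_empty_or_nonempty with rfl | hs
    · have h1 : (insert i ∅ : Finset ℕ) ∪ G = insert i G := by ext x; simp
      have h2 : (insert i ∅ : Finset ℕ) = {i} := rfl
      rw [h1, ordsum_insert_min a (fun j hj => hFG i (by simp) j hj) hG, h2, ordsum_singleton]
    · have hiG : ∀ j ∈ s ∪ G, i < j := by
        intro j hj
        rcases Finset.mem_union.1 hj with h | h
        · exact hmin j h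
        · exact hFG i (Finset.mem_insert_self i s) j h
      have hsG : FinsetLT s G := fun x hx j hj => hFG x (Finset.mem_insert_of_mem hx) j hj
      rw [Finset.insert_union, ordsum_insert_min a hiG ⟨hs.choose, Finset.mem_union_left _ hs.choose_spec⟩,
        ih hsG hs, ordsum_insert_min a hmin hs, add_assoc]

/-- Ordered sums of a block sequence are ordered sums over the union of blocks. -/
lemma ordsum_comp (B : ℕ → Finset ℕ) (hne : ∀ n, (B n).Nonempty)
    (hmono : ∀ i j, i < j → FinsetLT (B i) (B j)) {F : Finset ℕ} (hF : F.Nonempty) :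
    (F.biUnion B).Nonempty ∧
      ordsum (fun n => ordsum a (B n)) F = ordsum a (F.biUnion B) := by
  induction F using Finset.induction_on_min with
  | empty => exact absurd hF (by simp)
  | insert i s hmin ih =>
    rcases s.eq_empty_or_nonempty with rfl | hs
    · have h2 : (insert i ∅ : Finset ℕ) = {i} := rfl
      rw [h2, Finset.singleton_biUnion, ordsum_singleton]
      exact ⟨hne i, rfl⟩
    · obtain ⟨hune, heq⟩ := ih hs
      have hlt : FinsetLT (B i) (s.biUnion B) := by
        intro x hx j hj
        obtain ⟨i', hi', hj'⟩ := Finset.mem_biUnion.1 hj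
        exact hmono i i' (hmin i' hi') x hx j hj'
      constructor
      · exact ⟨hune.choose, Finset.mem_biUnion.2
          (let ⟨i', hi', hj'⟩ := Finset.mem_biUnion.1 hune.choose_spec
           ⟨i', Finset.mem_insert_of_mem hi', hj'⟩)⟩
      · rw [Finset.biUnion_insert, ordsum_union a hlt (hne i) hune, ← heq,
          ordsum_insert_min _ hmin hs]

end OrdsumLemmas

/-! ### An idempotent ultrafilter concentrated on all tails -/

attribute [local instance] Ultrafilter.add Ultrafilter.addSemigroup

section Ultra

variable {S : Type*} [AddSemigroup S] (a : ℕ → S)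

lemma FStail_anti {n m : ℕ} (h : n ≤ m) : FStail a m ⊆ FStail a n := by
  rintro s ⟨F, hF, hge, rfl⟩
  exact ⟨F, hF, fun i hi => le_trans h (hge i hi), rfl⟩

lemma mem_FStail_self (n : ℕ) : a n ∈ FStail a n :=
  ⟨{n}, ⟨n, by simp⟩, by simp, ordsum_singleton a n⟩

lemma exists_good_ultrafilter :
    ∃ U : Ultrafilter S, U + U = U ∧ ∀ n, FStail a n ∈ U := by
  let C : Set (Ultrafilter S) := ⋂ n, { U | FStail a n ∈ U }
  have h := exists_idempotent_in_compact_add_subsemigroup ?_ C ?_ ?_ ?_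
  · rcases h with ⟨U, hU, U_idem⟩
    exact ⟨U, U_idem, fun n => Set.mem_iInter.mp hU n⟩
  · exact Ultrafilter.continuous_add_left
  · apply IsCompact.nonempty_iInter_of_sequence_nonempty_isCompact_isClosed
    · intro n U hU
      exact Filter.mem_of_superset hU (FStail_anti a (Nat.le_succ n))
    · intro n
      exact ⟨pure _, Filter.mem_pure.mpr <| mem_FStail_self a n⟩
    · exact (ultrafilter_isClosed_basic _).isCompact
    · intro n
      apply ultrafilter_isClosed_basic
  · exact IsClosed.isCompact (isClosed_iInter fun i => ultrafilter_isClosed_basic _)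
  · intro U hU V hV
    rw [Set.mem_iInter] at *
    intro n
    have key : ∀ᶠ m in ↑(U + V), m ∈ FStail a n := by
      rw [Ultrafilter.eventually_add]
      filter_upwards [hU n] with m hm
      obtain ⟨F, hFne, hFge, rfl⟩ := hm
      have hmax : ∀ i ∈ F, i ≤ F.max' hFne := fun i hi => Finset.le_max' F i hi
      filter_upwards [hV (F.max' hFne + 1)] with m' hm'
      obtain ⟨G, hGne, hGge, rfl⟩ := hm'
      have hFG : FinsetLT F G := fun i hi j hj =>
        lt_of_le_of_lt (hmax i hi) (Nat.lt_of_succ_le (hGge j hj))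
      exact ⟨F ∪ G, ⟨hFne.choose, Finset.mem_union_left _ hFne.choose_spec⟩,
        fun i hi => (Finset.mem_union.1 hi).elim (hFge i)
          (fun h => le_trans (le_trans (hFge _ (F.max'_mem hFne)) (Nat.le_succ _)) (hGge i h)),
        ordsum_union a hFG hFne hGne⟩
    exact key

end Ultra
/-! ### The construction -/

noncomputable section Construction

open Classical

variable {S : Type*} [AddSemigroup S]

/-- the color of time step `t` -/
def kcol (t : ℕ) : ℕ := (Nat.unpair t).1

/-- `z` is the (unique) `U`-limit of `x + s` -/
def Pois (U : Ultrafilter S) (x z : S) : Prop := {s | x + s = z} ∈ U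

variable (a : ℕ → S) (U : Ultrafilter S)

/-- values of unions of blocks of color `k` among the first `t` blocks -/
def valSet (B : ℕ → Finset ℕ) (k t : ℕ) : Set S :=
  {v | ∃ I : Finset ℕ, I.Nonempty ∧ (∀ i ∈ I, i < t ∧ kcol i = k) ∧
    ordsum a (I.biUnion B) = v}

def poisSet (B : ℕ → Finset ℕ) (k t : ℕ) : Set S :=
  {z | ∃ y ∈ valSet a B k t, Pois U y z}

def reach (B : ℕ → Finset ℕ) (k t : ℕ) : Set S :=
  {z | z ∈ valSet a B k t ∨ z ∈ poisSet a U B k t}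

def Zb (B : ℕ → Finset ℕ) (k t : ℕ) : Set S :=
  {z | ∃ l, l ≠ k ∧ z ∈ reach a U B l t}

def bnd (B : ℕ → Finset ℕ) (t : ℕ) : ℕ := ((Finset.range t).biUnion B).sup id + 1

def goodS (B : ℕ → Finset ℕ) (t : ℕ) : Set S :=
  FStail a (bnd B t) ∩
    {s | ∀ z ∈ Zb a U B (kcol t) t, (s ≠ z ∧ ¬ Pois U s z) ∧
      ∀ x ∈ valSet a B (kcol t) t, x + s ≠ z ∧ ¬ Pois U (x + s) z}

def Cond (B : ℕ → Finset ℕ) (t : ℕ) (Bt : Finset ℕ) : Prop :=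
  Bt.Nonempty ∧ (∀ i, i < t → FinsetLT (B i) Bt) ∧ ordsum a Bt ∈ goodS a U B t

def DisjInv (B : ℕ → Finset ℕ) (t : ℕ) : Prop :=
  ∀ k l, k ≠ l → ∀ z, z ∈ reach a U B k t → z ∈ reach a U B l t → False

def pick (B : ℕ → Finset ℕ) (t : ℕ) : Finset ℕ :=
  if h : ∃ Bt, Cond a U B t Bt then h.choose else {0}

def blkAux : ℕ → ℕ → Finset ℕ
  | 0 => fun _ => ∅
  | T + 1 => Function.update (blkAux T) T (pick a U (blkAux T) T)

def blk (t : ℕ) : Finset ℕ := blkAux a U (t + 1) t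

variable {a U}

lemma blkAux_eq_blk : ∀ T t, t < T → blkAux a U T t = blk a U t := by
  intro T
  induction T with
  | zero => intro t ht; omega
  | succ T ih =>
    intro t ht
    rcases Nat.lt_succ_iff_lt_or_eq.1 ht with h | rfl
    · show Function.update (blkAux a U T) T (pick a U (blkAux a U T) T) t = _
      rw [Function.update_of_ne (by omega : t ≠ T)]
      exact ih t h
    · rfl

/-! congruence lemmas: all notions at time `t` only depend on blocks before `t` -/

section Congr

variable {B B' : ℕ → Finset ℕ} {t : ℕ} (hBB : ∀ i, i < t → B i = B' i)

include hBB

lemma valSet_congr (k : ℕ) : valSet a B k t = valSet a B' k t := by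
  ext v
  constructor
  · rintro ⟨I, hIne, hI, rfl⟩
    refine ⟨I, hIne, hI, ?_⟩
    rw [Finset.biUnion_congr rfl (fun i hi => (hBB i (hI i hi).1).symm)]
  · rintro ⟨I, hIne, hI, rfl⟩
    refine ⟨I, hIne, hI, ?_⟩
    rw [Finset.biUnion_congr rfl (fun i hi => hBB i (hI i hi).1)]

lemma poisSet_congr (k : ℕ) : poisSet a U B k t = poisSet a U B' k t := by
  unfold poisSet; rw [valSet_congr hBB]

lemma reach_congr (k : ℕ) : reach a U B k t = reach a U B' k t := by
  unfold reach; rw [valSet_congr hBB, poisSet_congr hBB]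

lemma Zb_congr (k : ℕ) : Zb a U B k t = Zb a U B' k t := by
  unfold Zb
  ext z
  simp only [Set.mem_setOf_eq]
  constructor
  · rintro ⟨l, hl, hz⟩
    exact ⟨l, hl, by rw [← reach_congr hBB l]; exact hz⟩
  · rintro ⟨l, hl, hz⟩
    exact ⟨l, hl, by rw [reach_congr hBB l]; exact hz⟩

lemma bnd_congr : bnd B t = bnd B' t := by
  unfold bnd
  rw [Finset.biUnion_congr rfl (fun i hi => hBB i (Finset.mem_range.1 hi))]

lemma goodS_congr : goodS a U B t = goodS a U B' t := by
  unfold goodS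
  rw [valSet_congr hBB, Zb_congr hBB, bnd_congr hBB]

lemma Cond_congr (Bt : Finset ℕ) : Cond a U B t Bt ↔ Cond a U B' t Bt := by
  unfold Cond
  rw [goodS_congr hBB]
  constructor <;> rintro ⟨h1, h2, h3⟩ <;> refine ⟨h1, fun i hi => ?_, h3⟩
  · rw [← hBB i hi]; exact h2 i hi
  · rw [hBB i hi]; exact h2 i hi

end Congr

/-! finiteness -/

lemma valSet_finite (B : ℕ → Finset ℕ) (k t : ℕ) : (valSet a B k t).Finite := by
  apply Set.Finite.subset
    (Set.Finite.image (fun I : Finset ℕ => ordsum a (I.biUnion B))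
      (Finset.range t).powerset.finite_toSet)
  rintro v ⟨I, hIne, hI, rfl⟩
  exact ⟨I, Finset.mem_coe.2 (Finset.mem_powerset.2
    (fun i hi => Finset.mem_range.2 (hI i hi).1)), rfl⟩

lemma pois_unique {x z z' : S} (h : Pois U x z) (h' : Pois U x z') : z = z' := by
  obtain ⟨s, hs1, hs2⟩ := Ultrafilter.nonempty_of_mem (Filter.inter_mem h h')
  exact hs1 ▸ hs2

lemma poisSet_finite (B : ℕ → Finset ℕ) (k t : ℕ) : (poisSet a U B k t).Finite := by
  have hsub : ∀ y : S, ({z | Pois U y z} : Set S).Subsingleton :=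
    fun y z hz z' hz' => pois_unique hz hz'
  apply Set.Finite.subset ((valSet_finite B k t).biUnion (fun y _ => (hsub y).finite))
  rintro z ⟨y, hy, hp⟩
  exact Set.mem_biUnion hy hp

lemma reach_finite (B : ℕ → Finset ℕ) (k t : ℕ) : (reach a U B k t).Finite :=
  Set.Finite.union (valSet_finite B k t) (poisSet_finite B k t)

lemma Zb_finite (B : ℕ → Finset ℕ) (k t : ℕ) : (Zb a U B k t).Finite := by
  apply Set.Finite.subset
    (Set.Finite.biUnion ((Finset.range t).image kcol).finite_toSet
      (fun l _ => reach_finite B l t))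
  rintro z ⟨l, hl, hz⟩
  refine Set.mem_biUnion ?_ hz
  obtain ⟨I, hIne, hI, -⟩ | ⟨y, ⟨I, hIne, hI, -⟩, -⟩ := hz <;>
  · obtain ⟨i, hi⟩ := hIne
    simp only [Finset.coe_image, Set.mem_image, Finset.mem_coe, Finset.mem_range]
    exact ⟨i, (hI i hi).1, (hI i hi).2⟩

/-! ### Core ultrafilter lemmas -/

section Core

variable {a : ℕ → S} {U : Ultrafilter S}

lemma pois_step (hidem : U + U = U) {x z : S}
    (h : {s | Pois U (x + s) z} ∈ U) : Pois U x z := by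
  have h' : ∀ᶠ s in (U : Filter S), ∀ᶠ r in (U : Filter S), x + (s + r) = z := by
    have h0 : ∀ᶠ s in (U : Filter S), {r | (x + s) + r = z} ∈ U := h
    filter_upwards [h0] with s hs
    have h1 : ∀ᶠ r in (U : Filter S), (x + s) + r = z := hs
    filter_upwards [h1] with r hr
    rw [← add_assoc]; exact hr
  have h2 : {c | x + c = z} ∈ U + U :=
    Ultrafilter.mem_coe.1 ((Ultrafilter.eventually_add U U (fun c => x + c = z)).2 h')
  rwa [hidem] at h2

lemma pois_eps (hidem : U + U = U) {z : S}
    (h : {s | Pois U s z} ∈ U) : {c | c = z} ∈ U := by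
  have h' : ∀ᶠ s in (U : Filter S), ∀ᶠ r in (U : Filter S), s + r = z := by
    have h0 : ∀ᶠ s in (U : Filter S), {r | s + r = z} ∈ U := h
    filter_upwards [h0] with s hs
    exact hs
  have h2 : {c | c = z} ∈ U + U :=
    Ultrafilter.mem_coe.1 ((Ultrafilter.eventually_add U U (fun c => c = z)).2 h')
  rwa [hidem] at h2

lemma not_principal (ha : IsProperSeq a) (htail : ∀ n, FStail a n ∈ U) (z : S) :
    {s | s = z} ∉ U := by
  intro h
  obtain ⟨s, hsz, F, hFne, hFge, hF⟩ :=
    Ultrafilter.nonempty_of_mem (Filter.inter_mem h (htail 0))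
  obtain ⟨s', hs'z, G, hGne, hGge, hG⟩ :=
    Ultrafilter.nonempty_of_mem (Filter.inter_mem h (htail (F.max' hFne + 1)))
  have hFG : FinsetLT F G := fun i hi j hj =>
    lt_of_le_of_lt (Finset.le_max' F i hi) (Nat.lt_of_succ_le (hGge j hj))
  exact ha F G hFne hGne hFG (by rw [hF, hG, hsz, hs'z])

lemma goodS_mem (ha : IsProperSeq a) (hidem : U + U = U) (htail : ∀ n, FStail a n ∈ U)
    {B : ℕ → Finset ℕ} {t : ℕ} (hInv : DisjInv a U B t) : goodS a U B t ∈ U := by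
  refine Filter.inter_mem (htail _) ?_
  have key : ∀ᶠ s in (U : Filter S), ∀ z ∈ Zb a U B (kcol t) t,
      ((s ≠ z ∧ ¬ Pois U s z) ∧
        ∀ x ∈ valSet a B (kcol t) t, x + s ≠ z ∧ ¬ Pois U (x + s) z) := by
    rw [Filter.eventually_all_finite (Zb_finite B (kcol t) t)]
    intro z hz
    have hnpx : ∀ x ∈ valSet a B (kcol t) t, ¬ Pois U x z := by
      intro x hx hp
      obtain ⟨l, hl, hzl⟩ := hz
      exact hInv l (kcol t) hl z hzl (Or.inr ⟨x, hx, hp⟩)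
    have h1 : ∀ᶠ s in (U : Filter S), s ≠ z :=
      Ultrafilter.compl_mem_iff_notMem.2 (not_principal ha htail z)
    have h2 : ∀ᶠ s in (U : Filter S), ¬ Pois U s z :=
      Ultrafilter.compl_mem_iff_notMem.2
        (fun hmem => not_principal ha htail z (pois_eps hidem hmem))
    have h3 : ∀ᶠ s in (U : Filter S),
        ∀ x ∈ valSet a B (kcol t) t, x + s ≠ z ∧ ¬ Pois U (x + s) z := by
      rw [Filter.eventually_all_finite (valSet_finite B (kcol t) t)]
      intro x hx
      have hnp : ¬ Pois U x z := hnpx x hx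
      have h31 : ∀ᶠ s in (U : Filter S), x + s ≠ z :=
        Ultrafilter.compl_mem_iff_notMem.2 hnp
      have h32 : ∀ᶠ s in (U : Filter S), ¬ Pois U (x + s) z :=
        Ultrafilter.compl_mem_iff_notMem.2 (fun hmem => hnp (pois_step hidem hmem))
      exact h31.and h32
    exact (h1.and h2).and h3
  exact key

lemma exists_block (ha : IsProperSeq a) (hidem : U + U = U) (htail : ∀ n, FStail a n ∈ U)
    {B : ℕ → Finset ℕ} {t : ℕ} (hInv : DisjInv a U B t) : ∃ Bt, Cond a U B t Bt := by
  obtain ⟨s, hsg⟩ := Ultrafilter.nonempty_of_mem (goodS_mem ha hidem htail hInv)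
  obtain ⟨⟨F, hFne, hFge, rfl⟩, hg⟩ := hsg
  refine ⟨F, hFne, ?_, ⟨⟨F, hFne, hFge, rfl⟩, hg⟩⟩
  intro i hi x hx j hj
  have hmem : x ∈ (Finset.range t).biUnion B :=
    Finset.mem_biUnion.2 ⟨i, Finset.mem_range.2 hi, hx⟩
  have hxle : x ≤ ((Finset.range t).biUnion B).sup id := Finset.le_sup (f := id) hmem
  have hj' := hFge j hj
  unfold bnd at hj'
  omega

/-! ### Evolution of `valSet` when a block is added -/

lemma valSet_succ {B : ℕ → Finset ℕ} {t : ℕ} (hprevne : ∀ i, i < t → (B i).Nonempty)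
    (hlt : ∀ i, i < t → FinsetLT (B i) (B t)) (hBt : (B t).Nonempty) (c : ℕ) {v : S} :
    v ∈ valSet a B c (t + 1) ↔ v ∈ valSet a B c t ∨
      (c = kcol t ∧ (v = ordsum a (B t) ∨
        ∃ x ∈ valSet a B c t, v = x + ordsum a (B t))) := by
  constructor
  · rintro ⟨I, hIne, hI, rfl⟩
    by_cases ht : t ∈ I
    · right
      refine ⟨(hI t ht).2.symm, ?_⟩
      set I' := I.erase t with hI'def
      have hI'lt : ∀ i ∈ I', i < t := fun i hi =>
        lt_of_le_of_ne (Nat.lt_succ_iff.1 (hI i (Finset.mem_of_mem_erase hi)).1)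
          (Finset.ne_of_mem_erase hi)
      rcases I'.eq_empty_or_nonempty with hempty | hne'
      · left
        have hsing : I = {t} := by
          apply Finset.eq_singleton_iff_unique_mem.2
          refine ⟨ht, fun x hx => ?_⟩
          by_contra hxt
          have : x ∈ I' := Finset.mem_erase.2 ⟨hxt, hx⟩
          rw [hempty] at this
          simp at this
        rw [hsing, Finset.singleton_biUnion]
      · right
        have hIins : I = insert t I' := (Finset.insert_erase ht).symm
        have hbne : (I'.biUnion B).Nonempty := by
          obtain ⟨i0, hi0⟩ := hne'
          exact ⟨(hprevne i0 (hI'lt i0 hi0)).choose,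
            Finset.mem_biUnion.2 ⟨i0, hi0, (hprevne i0 (hI'lt i0 hi0)).choose_spec⟩⟩
        have hblt : FinsetLT (I'.biUnion B) (B t) := by
          intro x hx j hj
          obtain ⟨i, hi, hxi⟩ := Finset.mem_biUnion.1 hx
          exact hlt i (hI'lt i hi) x hxi j hj
        have hdecomp : I.biUnion B = I'.biUnion B ∪ B t := by
          rw [hIins, Finset.biUnion_insert, Finset.union_comm]
        rw [hdecomp, ordsum_union a hblt hbne hBt]
        exact ⟨ordsum a (I'.biUnion B),
          ⟨I', hne', fun i hi => ⟨hI'lt i hi, (hI i (Finset.mem_of_mem_erase hi)).2⟩, rfl⟩, rfl⟩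
    · left
      exact ⟨I, hIne, fun i hi =>
        ⟨lt_of_le_of_ne (Nat.lt_succ_iff.1 (hI i hi).1) (fun he => ht (he ▸ hi)),
          (hI i hi).2⟩, rfl⟩
  · rintro (⟨I, hIne, hI, rfl⟩ | ⟨hc, rfl | ⟨x, ⟨I, hIne, hI, rfl⟩, rfl⟩⟩)
    · exact ⟨I, hIne, fun i hi => ⟨Nat.lt_succ_of_lt (hI i hi).1, (hI i hi).2⟩, rfl⟩
    · refine ⟨{t}, ⟨t, Finset.mem_singleton_self t⟩, ?_, by rw [Finset.singleton_biUnion]⟩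
      intro i hi
      rw [Finset.mem_singleton] at hi
      exact ⟨by rw [hi]; exact Nat.lt_succ_self t, by rw [hi]; exact hc.symm⟩
    · have hbne : (I.biUnion B).Nonempty := by
        obtain ⟨i0, hi0⟩ := hIne
        exact ⟨(hprevne i0 (hI i0 hi0).1).choose,
          Finset.mem_biUnion.2 ⟨i0, hi0, (hprevne i0 (hI i0 hi0).1).choose_spec⟩⟩
      have hblt : FinsetLT (I.biUnion B) (B t) := by
        intro x hx j hj
        obtain ⟨i, hi, hxi⟩ := Finset.mem_biUnion.1 hx
        exact hlt i (hI i hi).1 x hxi j hj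
      refine ⟨insert t I, ⟨t, Finset.mem_insert_self t I⟩, ?_, ?_⟩
      · intro i hi
        rcases Finset.mem_insert.1 hi with rfl | hi
        · exact ⟨Nat.lt_succ_self i, hc.symm⟩
        · exact ⟨Nat.lt_succ_of_lt (hI i hi).1, (hI i hi).2⟩
      · rw [Finset.biUnion_insert, Finset.union_comm, ordsum_union a hblt hbne hBt]
  end Core

section Main

variable {a : ℕ → S} {U : Ultrafilter S}

lemma reach_succ_ne {B : ℕ → Finset ℕ} {t : ℕ} (hprevne : ∀ i, i < t → (B i).Nonempty)
    (hlt : ∀ i, i < t → FinsetLT (B i) (B t)) (hBt : (B t).Nonempty) {c : ℕ}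
    (hc : c ≠ kcol t) {z : S} :
    z ∈ reach a U B c (t + 1) → z ∈ reach a U B c t := by
  rintro (hval | ⟨y, hy, hp⟩)
  · rcases (valSet_succ hprevne hlt hBt c).1 hval with h | ⟨hck, -⟩
    · exact Or.inl h
    · exact absurd hck hc
  · rcases (valSet_succ hprevne hlt hBt c).1 hy with h | ⟨hck, -⟩
    · exact Or.inr ⟨y, h, hp⟩
    · exact absurd hck hc

lemma main (ha : IsProperSeq a) (hidem : U + U = U) (htail : ∀ n, FStail a n ∈ U) :
    ∀ t, DisjInv a U (blk a U) t ∧ ∀ i, i < t → Cond a U (blk a U) i (blk a U i) := by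
  intro t
  induction t with
  | zero =>
    constructor
    · intro k l hkl z hz _
      rcases hz with ⟨I, hIne, hI, -⟩ | ⟨y, ⟨I, hIne, hI, -⟩, -⟩ <;>
        exact absurd (hI _ hIne.choose_spec).1 (by omega)
    · omega
  | succ t ih =>
    obtain ⟨hInv, hCond⟩ := ih
    have hprevne : ∀ i, i < t → (blk a U i).Nonempty := fun i hi => (hCond i hi).1
    have hagt : ∀ i, i < t → blkAux a U t i = blk a U i := fun i hi => blkAux_eq_blk t i hi
    have hex : ∃ Bt, Cond a U (blk a U) t Bt := exists_block ha hidem htail hInv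
    have hex' : ∃ Bt, Cond a U (blkAux a U t) t Bt := by
      obtain ⟨Bt, hBt⟩ := hex
      exact ⟨Bt, (Cond_congr (fun i hi => (hagt i hi).symm) Bt).1 hBt⟩
    have hCt : Cond a U (blk a U) t (blk a U t) := by
      have hpick : blk a U t = pick a U (blkAux a U t) t := by
        show Function.update (blkAux a U t) t (pick a U (blkAux a U t) t) t = _
        rw [Function.update_self]
      rw [hpick]
      unfold pick
      rw [dif_pos hex']
      exact (Cond_congr hagt _).1 hex'.choose_spec
    have hBtne : (blk a U t).Nonempty := hCt.1
    have hltB : ∀ i, i < t → FinsetLT (blk a U i) (blk a U t) := hCt.2.1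
    have no_cross : ∀ c', c' ≠ kcol t → ∀ z, z ∈ reach a U (blk a U) (kcol t) (t + 1) →
        z ∈ reach a U (blk a U) c' t → False := by
      intro c' hc' z hzc hzc'
      have hzZ : z ∈ Zb a U (blk a U) (kcol t) t := ⟨c', hc', hzc'⟩
      have hg := hCt.2.2.2 z hzZ
      rcases hzc with hval | ⟨y, hy, hp⟩
      · rcases (valSet_succ hprevne hltB hBtne _).1 hval with hold | ⟨-, rfl | ⟨x, hx, rfl⟩⟩
        · exact hInv (kcol t) c' (fun he => hc' he.symm) z (Or.inl hold) hzc'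
        · exact hg.1.1 rfl
        · exact (hg.2 x hx).1 rfl
      · rcases (valSet_succ hprevne hltB hBtne _).1 hy with hold | ⟨-, rfl | ⟨x, hx, rfl⟩⟩
        · exact hInv (kcol t) c' (fun he => hc' he.symm) z (Or.inr ⟨y, hold, hp⟩) hzc'
        · exact hg.1.2 hp
        · exact (hg.2 x hx).2 hp
    constructor
    · intro c c' hcc' z hzc hzc'
      by_cases hck : c = kcol t
      · by_cases hc'k : c' = kcol t
        · exact hcc' (hck.trans hc'k.symm)
        · exact no_cross c' hc'k z (hck ▸ hzc)
            (reach_succ_ne hprevne hltB hBtne hc'k hzc')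
      · by_cases hc'k : c' = kcol t
        · exact no_cross c hck z (hc'k ▸ hzc')
            (reach_succ_ne hprevne hltB hBtne hck hzc)
        · exact hInv c c' hcc' z (reach_succ_ne hprevne hltB hBtne hck hzc)
            (reach_succ_ne hprevne hltB hBtne hc'k hzc')
    · intro i hi
      rcases Nat.lt_succ_iff_lt_or_eq.1 hi with h | rfl
      · exact hCond i h
      · exact hCt

end Main

end Construction

theorem stmt10 {S : Type*} [AddSemigroup S] (a : ℕ → S) (ha : IsProperSeq a) :
    ∃ b : ℕ → ℕ → S, (∀ k, Function.Injective (b k)) ∧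
      (∀ k, FSset (b k) ⊆ FSset a) ∧
      (∀ k l, k ≠ l → Disjoint (FSset (b k)) (FSset (b l))) := by
  classical
  obtain ⟨U, hidem, htail⟩ := exists_good_ultrafilter a
  have hmain := main (a := a) (U := U) ha hidem htail
  set B : ℕ → Finset ℕ := blk a U with hB
  have hBne : ∀ t, (B t).Nonempty := fun t => ((hmain (t + 1)).2 t (Nat.lt_succ_self t)).1
  have hBlt : ∀ i j, i < j → FinsetLT (B i) (B j) := fun i j hij =>
    ((hmain (j + 1)).2 j (Nat.lt_succ_self j)).2.1 i hij
  have hkcol : ∀ k n, kcol (Nat.pair k n) = k := by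
    intro k n; simp [kcol, Nat.unpair_pair]
  refine ⟨fun k n => ordsum a (B (Nat.pair k n)), ?_, ?_, ?_⟩
  · intro k n m h
    by_contra hnm
    rcases lt_trichotomy n m with hlt | heq | hgt
    · exact ha _ _ (hBne _) (hBne _) (hBlt _ _ (Nat.pair_lt_pair_right k hlt)) h
    · exact hnm heq
    · exact ha _ _ (hBne _) (hBne _) (hBlt _ _ (Nat.pair_lt_pair_right k hgt)) h.symm
  · intro k z hz
    obtain ⟨F, hFne, hFeq⟩ := hz
    obtain ⟨hne, heq⟩ := ordsum_comp a (fun n => B (Nat.pair k n)) (fun n => hBne _)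
      (fun i j hij => hBlt _ _ (Nat.pair_lt_pair_right k hij)) hFne
    exact ⟨F.biUnion (fun n => B (Nat.pair k n)), hne, by rw [← heq]; exact hFeq⟩
  · intro k l hkl
    rw [Set.disjoint_left]
    intro z hzk hzl
    obtain ⟨F, hFne, hFeq⟩ := hzk
    obtain ⟨G, hGne, hGeq⟩ := hzl
    obtain ⟨hneF, heqF⟩ := ordsum_comp a (fun n => B (Nat.pair k n)) (fun n => hBne _)
      (fun i j hij => hBlt _ _ (Nat.pair_lt_pair_right k hij)) hFne
    obtain ⟨hneG, heqG⟩ := ordsum_comp a (fun n => B (Nat.pair l n)) (fun n => hBne _)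
      (fun i j hij => hBlt _ _ (Nat.pair_lt_pair_right l hij)) hGne
    set I : Finset ℕ := F.image (Nat.pair k) with hI
    set J : Finset ℕ := G.image (Nat.pair l) with hJ
    have hIne : I.Nonempty := hFne.image _
    have hJne : J.Nonempty := hGne.image _
    have hIJne : (I ∪ J).Nonempty := ⟨hIne.choose, Finset.mem_union_left _ hIne.choose_spec⟩
    set T : ℕ := (I ∪ J).max' hIJne + 1 with hT
    have hIview : z ∈ valSet a B k T := by
      refine ⟨I, hIne, ?_, ?_⟩
      · intro i hi
        obtain ⟨n, hn, rfl⟩ := Finset.mem_image.1 hi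
        refine ⟨?_, hkcol k n⟩
        have := Finset.le_max' (I ∪ J) _ (Finset.mem_union_left _ hi)
        omega
      · rw [hI, Finset.image_biUnion]
        rw [← heqF]; exact hFeq
    have hJview : z ∈ valSet a B l T := by
      refine ⟨J, hJne, ?_, ?_⟩
      · intro i hi
        obtain ⟨n, hn, rfl⟩ := Finset.mem_image.1 hi
        refine ⟨?_, hkcol l n⟩
        have := Finset.le_max' (I ∪ J) _ (Finset.mem_union_right _ hi)
        omega
      · rw [hJ, Finset.image_biUnion]
        rw [← heqG]; exact hGeq
    exact (hmain T).1 k l hkl z (Or.inl hIview) (Or.inl hJview)
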